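/- Suppose x̂ ∈ P. Let ‖·‖ be any norm on ℝ^n with dual norm ‖a‖_* = sup{vᵀ a : ‖v‖ ≤ 1}, for each i ∈ I let v̂(a_i) be a maximizer of vᵀ a_i over {v ∈ ℝ^n : ‖v‖ = 1}, and set π_i(x̂) = x̂ − ((a_iᵀ x̂ − b_i)/‖a_i‖_*) · v̂(a_i). Let i* ∈ argmin_{i ∈ I} (a_iᵀ x̂ − b_i)/‖a_i‖_*. Then (c*, y*, ε*) = (a_{i*}/‖a_{i*}‖', e_{i*}/‖a_{i*}‖', x̂ − π_{i*}(x̂)) is an optimal solution of GSIO(x̂): it is feasible and its objective value ‖ε*‖ = min_{i ∈ I} (a_iᵀ x̂ − b_i)/‖a_i‖_* equals the infimum of ‖ε‖ over all feasible (c, y, ε). -/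

import Mathlib

open Matrix

/-- Feasibility for the single-point generalized inverse linear optimization
problem `GSIO(x̂)`: `Aᵀ y = c`, `y ≥ 0`, `cᵀ x̂ = bᵀ y + cᵀ ε`, `‖c‖' = 1`. -/
def GSIOFeas {m n : ℕ} (A : Matrix (Fin m) (Fin n) ℝ) (b : Fin m → ℝ)
    (N : (Fin n → ℝ) → ℝ) (xhat : Fin n → ℝ)
    (c : Fin n → ℝ) (y : Fin m → ℝ) (ε : Fin n → ℝ) : Prop :=
  Aᵀ.mulVec y = c ∧ (∀ i, 0 ≤ y i) ∧ c ⬝ᵥ xhat = b ⬝ᵥ y + c ⬝ᵥ ε ∧ N c = 1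

theorem stmt_0
    (m n : ℕ) (hm : 0 < m) (hn : 0 < n)
    (A : Matrix (Fin m) (Fin n) ℝ) (b : Fin m → ℝ)
    (hrows : ∀ i, A i ≠ 0)
    (hPint : (interior {x : Fin n → ℝ | ∀ i, b i ≤ A.mulVec x i}).Nonempty)
    -- the normalization norm ‖·‖'
    (N : (Fin n → ℝ) → ℝ)
    (hN₁ : ∀ x y, N (x + y) ≤ N x + N y)
    (hN₂ : ∀ (a : ℝ) (x : Fin n → ℝ), N (a • x) = |a| * N x)
    (hN₃ : ∀ x, x ≠ 0 → 0 < N x)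
    -- the objective norm ‖·‖
    (M : (Fin n → ℝ) → ℝ)
    (hM₁ : ∀ x y, M (x + y) ≤ M x + M y)
    (hM₂ : ∀ (a : ℝ) (x : Fin n → ℝ), M (a • x) = |a| * M x)
    (hM₃ : ∀ x, x ≠ 0 → 0 < M x)
    -- the dual norm values ‖a_i‖_* = sup { vᵀ a_i : ‖v‖ ≤ 1 }
    (dstar : Fin m → ℝ)
    (hdstar : ∀ i, IsLUB {t : ℝ | ∃ v : Fin n → ℝ, M v ≤ 1 ∧ t = v ⬝ᵥ A i} (dstar i))
    -- maximizers v̂(a_i) of vᵀ a_i over { v : ‖v‖ = 1 }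
    (vhat : Fin m → Fin n → ℝ)
    (hvhatnorm : ∀ i, M (vhat i) = 1)
    (hvhatmax : ∀ i (v : Fin n → ℝ), M v = 1 → v ⬝ᵥ A i ≤ vhat i ⬝ᵥ A i)
    -- the observed decision x̂ ∈ P
    (xhat : Fin n → ℝ) (hxhatP : ∀ i, b i ≤ A.mulVec xhat i)
    -- the projections π_i(x̂) = x̂ − ((a_iᵀ x̂ − b_i)/‖a_i‖_*) • v̂(a_i)
    (proj : Fin m → Fin n → ℝ)
    (hproj : ∀ i, proj i = xhat - ((A i ⬝ᵥ xhat - b i) / dstar i) • vhat i)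
    -- i* ∈ argmin_i (a_iᵀ x̂ − b_i)/‖a_i‖_*
    (istar : Fin m)
    (histar : ∀ i, (A istar ⬝ᵥ xhat - b istar) / dstar istar ≤ (A i ⬝ᵥ xhat - b i) / dstar i) :
    GSIOFeas A b N xhat ((N (A istar))⁻¹ • A istar)
        ((N (A istar))⁻¹ • (Pi.single istar 1 : Fin m → ℝ)) (xhat - proj istar) ∧
    M (xhat - proj istar) = (A istar ⬝ᵥ xhat - b istar) / dstar istar ∧
    ∀ c y ε, GSIOFeas A b N xhat c y ε → M (xhat - proj istar) ≤ M ε := by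
  -- notation
  set g : Fin m → ℝ := fun i => A i ⬝ᵥ xhat - b i with hg
  -- basic norm facts
  have hM0 : M 0 = 0 := by simpa using hM₂ 0 0
  have hMnonneg : ∀ x, 0 ≤ M x := by
    intro x
    by_cases hx : x = 0
    · simp [hx, hM0]
    · exact (hM₃ x hx).le
  -- upper bound from LUB
  have hub : ∀ i (v : Fin n → ℝ), M v ≤ 1 → v ⬝ᵥ A i ≤ dstar i :=
    fun i v hv => (hdstar i).1 ⟨v, hv, rfl⟩
  -- the maximizer attains the dual norm
  have hva : ∀ i, vhat i ⬝ᵥ A i = dstar i := by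
    intro i
    refine le_antisymm (hub i _ (hvhatnorm i).le) ?_
    have hvh0 : 0 ≤ vhat i ⬝ᵥ A i := by
      have h1 : M (-vhat i) = 1 := by
        have := hM₂ (-1) (vhat i)
        simp only [neg_one_smul, abs_neg, abs_one, one_mul] at this
        rw [this, hvhatnorm i]
      have h2 := hvhatmax i _ h1
      rw [neg_dotProduct] at h2
      linarith
    refine (hdstar i).2 ?_
    rintro t ⟨v, hv, rfl⟩
    by_cases hv0 : v ⬝ᵥ A i ≤ 0
    · linarith
    · push_neg at hv0
      have hvne : v ≠ 0 := by
        rintro rfl; simp [zero_dotProduct] at hv0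
      have hMv : 0 < M v := hM₃ v hvne
      have hu : M ((M v)⁻¹ • v) = 1 := by
        rw [hM₂, abs_of_pos (by positivity), inv_mul_cancel₀ hMv.ne']
      have h3 := hvhatmax i _ hu
      rw [smul_dotProduct, smul_eq_mul] at h3
      have h4 : v ⬝ᵥ A i ≤ (M v)⁻¹ * (v ⬝ᵥ A i) := by
        have : (1 : ℝ) ≤ (M v)⁻¹ := (one_le_inv₀ hMv).mpr hv
        nlinarith
      linarith
  -- dstar is positive
  have hdpos : ∀ i, 0 < dstar i := by
    intro i
    have hane : A i ≠ 0 := hrows i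
    have haa : 0 < A i ⬝ᵥ A i := by
      have h0 : 0 ≤ A i ⬝ᵥ A i := Finset.sum_nonneg fun j _ => mul_self_nonneg _
      rcases h0.lt_or_eq with h1 | h1
      · exact h1
      · exact absurd (dotProduct_self_eq_zero.mp h1.symm) hane
    have hMa : 0 < M (A i) := hM₃ _ hane
    have hu : M ((M (A i))⁻¹ • A i) = 1 := by
      rw [hM₂, abs_of_pos (by positivity), inv_mul_cancel₀ hMa.ne']
    have := hub i _ hu.le
    rw [smul_dotProduct, smul_eq_mul] at this
    calc (0:ℝ) < (M (A i))⁻¹ * (A i ⬝ᵥ A i) := by positivity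
    _ ≤ dstar i := this
  -- gaps are nonnegative
  have hgnn : ∀ i, 0 ≤ g i := fun i => sub_nonneg.mpr (hxhatP i)
  -- the dual-norm inequality : A i ⬝ᵥ ε ≤ dstar i * M ε for any ε
  have hdual : ∀ i (ε : Fin n → ℝ), A i ⬝ᵥ ε ≤ dstar i * M ε := by
    intro i ε
    by_cases hε : ε = 0
    · simp [hε, dotProduct_zero, hM0]
    · have hMε : 0 < M ε := hM₃ ε hε
      have hu : M ((M ε)⁻¹ • ε) ≤ 1 := by
        rw [hM₂, abs_of_pos (by positivity), inv_mul_cancel₀ hMε.ne']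
      have h1 := hub i _ hu
      rw [smul_dotProduct, smul_eq_mul] at h1
      have h2 : ε ⬝ᵥ A i ≤ dstar i * M ε := by
        rw [← mul_le_mul_iff_right₀ hMε] at h1
        rw [← mul_assoc, mul_inv_cancel₀ hMε.ne', one_mul] at h1
        linarith [h1]
      rw [dotProduct_comm]; linarith
  -- A istar ≠ 0 facts
  have hNa : 0 < N (A istar) := hN₃ _ (hrows istar)
  set s : ℝ := (N (A istar))⁻¹ with hs
  have hspos : 0 < s := by positivity
  -- ε* computation
  have hεstar : xhat - proj istar = (g istar / dstar istar) • vhat istar := by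
    rw [hproj istar]; abel
  -- value of M at ε*
  have hMval : M (xhat - proj istar) = g istar / dstar istar := by
    rw [hεstar, hM₂, hvhatnorm istar, mul_one,
      abs_of_nonneg (div_nonneg (hgnn istar) (hdpos istar).le)]
  refine ⟨⟨?_, ?_, ?_, ?_⟩, hMval, ?_⟩
  · -- Aᵀ y* = c*
    ext j
    simp [Matrix.mulVec, dotProduct, Pi.single_apply, mul_comm, mul_ite]
  · -- y* ≥ 0
    intro i
    simp only [Pi.smul_apply, smul_eq_mul]
    by_cases h : i = istar <;> simp [h, Pi.single_apply] <;> positivity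
  · -- c*ᵀ x̂ = bᵀ y* + c*ᵀ ε*
    rw [hεstar, smul_dotProduct, smul_dotProduct,
      dotProduct_smul, dotProduct_smul]
    have hb : b ⬝ᵥ Pi.single istar 1 = b istar := by
      simp [dotProduct, Pi.single_apply]
    have hav : A istar ⬝ᵥ vhat istar = dstar istar := by
      rw [dotProduct_comm]; exact hva istar
    rw [hb, hav]
    have hd : dstar istar ≠ 0 := (hdpos istar).ne'
    field_simp
    simp only [smul_eq_mul]
    rw [div_mul_cancel₀ _ hd]
    simp only [hg]
    ring
  · -- N c* = 1
    rw [hN₂, abs_of_pos hspos, hs, inv_mul_cancel₀ hNa.ne']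
  · -- optimality
    rintro c y ε ⟨hAy, hy, heq, hNc⟩
    have hcx : c ⬝ᵥ xhat = y ⬝ᵥ A.mulVec xhat := by
      rw [← hAy, Matrix.mulVec_transpose, ← Matrix.dotProduct_mulVec]
    have hcε : c ⬝ᵥ ε = y ⬝ᵥ A.mulVec ε := by
      rw [← hAy, Matrix.mulVec_transpose, ← Matrix.dotProduct_mulVec]
    -- c ⬝ ε = Σ y i * g i
    have hsum : c ⬝ᵥ ε = ∑ i, y i * g i := by
      have : c ⬝ᵥ ε = c ⬝ᵥ xhat - b ⬝ᵥ y := by linarith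
      rw [this, hcx, dotProduct, dotProduct]
      rw [← Finset.sum_sub_distrib]
      refine Finset.sum_congr rfl fun i _ => ?_
      have : A.mulVec xhat i = A i ⬝ᵥ xhat := rfl
      rw [this, hg]
      ring
    set S : ℝ := ∑ i, y i * dstar i with hS
    have hSnn : 0 ≤ S := Finset.sum_nonneg fun i _ => mul_nonneg (hy i) (hdpos i).le
    have hSpos : 0 < S := by
      rcases hSnn.lt_or_eq with h | h
      · exact h
      · exfalso
        have hzero : ∀ i ∈ Finset.univ, y i * dstar i = 0 :=
          (Finset.sum_eq_zero_iff_of_nonneg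
            (fun i _ => mul_nonneg (hy i) (hdpos i).le)).mp h.symm
        have hy0 : y = 0 := by
          funext i
          have := hzero i (Finset.mem_univ i)
          rcases mul_eq_zero.mp this with h' | h'
          · exact h'
          · exact absurd h' (hdpos i).ne'
        rw [hy0, Matrix.mulVec_zero] at hAy
        rw [← hAy] at hNc
        have : N (0 : Fin n → ℝ) = 0 := by simpa using hN₂ 0 0
        rw [this] at hNc
        norm_num at hNc
    -- lower bound on Σ y i * g i
    have hlow : (g istar / dstar istar) * S ≤ ∑ i, y i * g i := by
      rw [hS, Finset.mul_sum]
      refine Finset.sum_le_sum fun i _ => ?_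
      have h1 : (g istar / dstar istar) * dstar i ≤ g i := by
        have h2 := histar i
        rw [div_le_div_iff₀ (hdpos istar) (hdpos i)] at h2
        rw [div_mul_eq_mul_div, div_le_iff₀ (hdpos istar)]
        simp only [hg]
        linarith
      calc g istar / dstar istar * (y i * dstar i)
          = y i * ((g istar / dstar istar) * dstar i) := by ring
        _ ≤ y i * g i := mul_le_mul_of_nonneg_left h1 (hy i)
    -- upper bound
    have hupb : (∑ i, y i * g i) ≤ M ε * S := by
      rw [hsum.symm, hcε, dotProduct, hS, Finset.mul_sum]
      refine Finset.sum_le_sum fun i _ => ?_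
      have h1 : A.mulVec ε i ≤ dstar i * M ε := hdual i ε
      calc y i * A.mulVec ε i ≤ y i * (dstar i * M ε) :=
            mul_le_mul_of_nonneg_left h1 (hy i)
        _ = M ε * (y i * dstar i) := by ring
    rw [hMval]
    have := hlow.trans hupb
    exact le_of_mul_le_mul_right this hSpos
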